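/- Let ψ'_c(K_n) denote the largest k for which the complete graph K_n admits a connected and complete k-edge-coloring. Then the limit superior, as n → ∞, of ψ'_c(K_n)/n^{3/2} is at most 1/√2. -/

import Mathlib

open SimpleGraph

/-- The subgraph of `G` formed by the edges of color `i`. -/
def colorClassSubgraph {V : Type*} {k : ℕ} (G : SimpleGraph V) (c : Sym2 V → Fin k)
    (i : Fin k) : G.Subgraph where
  verts := {v | ∃ w, G.Adj v w ∧ c s(v, w) = i}
  Adj v w := G.Adj v w ∧ c s(v, w) = i
  adj_sub h := h.1
  edge_vert h := ⟨_, h⟩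
  symm := ⟨fun v w h => ⟨h.1.symm, by rw [Sym2.eq_swap]; exact h.2⟩⟩

/-- `c` is a complete edge-coloring of `G` with `k` colors: every color is used on some
edge, and every two distinct colors appear on a pair of edges sharing a vertex. -/
def IsCompleteEdgeColoring {V : Type*} {k : ℕ} (G : SimpleGraph V)
    (c : Sym2 V → Fin k) : Prop :=
  (∀ i : Fin k, ∃ e ∈ G.edgeSet, c e = i) ∧
  ∀ i j : Fin k, i ≠ j →
    ∃ u v w : V, G.Adj u v ∧ G.Adj u w ∧ c s(u, v) = i ∧ c s(u, w) = j

/-- `c` is a connected edge-coloring: each color class induces a connected subgraph. -/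
def IsConnectedEdgeColoring {V : Type*} {k : ℕ} (G : SimpleGraph V)
    (c : Sym2 V → Fin k) : Prop :=
  ∀ i : Fin k, (colorClassSubgraph G c i).Connected


/-- The connected-pseudoachromatic index of the complete graph `K_n`: the supremum of
the set of `k` for which `K_n` admits a connected and complete `k`-edge-coloring. -/
noncomputable def connectedPseudoachromaticIndex (n : ℕ) : ℕ :=
  sSup {k : ℕ | ∃ c : Sym2 (Fin n) → Fin k,
    IsCompleteEdgeColoring (⊤ : SimpleGraph (Fin n)) c ∧
      IsConnectedEdgeColoring (⊤ : SimpleGraph (Fin n)) c}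



lemma connected_card_le' {V : Type*} [Fintype V] (G : SimpleGraph V) (h : G.Connected)
    [Fintype G.edgeSet] :
    Fintype.card V ≤ Fintype.card G.edgeSet + 1 := by
  classical
  obtain ⟨r⟩ := h.nonempty
  have key : ∀ v : V, v ≠ r → ∃ u : V, G.Adj v u ∧ G.dist r u < G.dist r v := by
    intro v hv
    obtain ⟨p, hp⟩ := (h.exists_walk_length_eq_dist r v)
    have hd : 0 < G.dist r v := h.pos_dist_of_ne (Ne.symm hv)
    have hnn : ¬ p.reverse.Nil := by
      rw [SimpleGraph.Walk.nil_iff_length_eq]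
      rw [SimpleGraph.Walk.length_reverse, hp]
      omega
    refine ⟨p.reverse.getVert 1, p.reverse.adj_snd hnn, ?_⟩
    have htail := p.reverse.length_tail_add_one hnn
    have : G.dist (p.reverse.getVert 1) r ≤ p.reverse.tail.length := SimpleGraph.dist_le _
    rw [SimpleGraph.dist_comm] at this
    rw [SimpleGraph.Walk.length_reverse, hp] at htail
    omega
  choose par hpar hdist using key
  let f : V → Sym2 V := fun v => if hv : v = r then s(r, r) else s(v, par v hv)
  have hinj : Set.InjOn f {v | v ≠ r} := by
    intro a ha b hb hab
    simp only [Set.mem_setOf_eq] at ha hb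
    simp only [f, dif_neg ha, dif_neg hb, Sym2.eq_iff] at hab
    rcases hab with ⟨h1, h2⟩ | ⟨h1, h2⟩
    · exact h1
    · exfalso
      have d1 := hdist a ha
      have d2 := hdist b hb
      rw [← h1] at d2; rw [h2] at d1
      omega
  have hmap : ∀ v (hv : v ≠ r), f v ∈ G.edgeSet := by
    intro v hv
    simp only [f, dif_neg hv]
    exact (hpar v hv)
  have := Fintype.card_le_of_injective
    (fun v : {v : V // v ≠ r} => (⟨f v, hmap v v.2⟩ : G.edgeSet))
    (fun a b hab => Subtype.ext (hinj a.2 b.2 (congrArg Subtype.val hab)))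
  have hcard : Fintype.card {v : V // v ≠ r} = Fintype.card V - 1 := by
    simp [Fintype.card_subtype_compl]
  have hpos : 0 < Fintype.card V := Fintype.card_pos_iff.mpr ⟨r⟩
  have hsame : Fintype.card {x // x ∈ G.edgeSet} = Fintype.card G.edgeSet :=
    Fintype.card_congr (Equiv.refl _)
  omega

lemma crude_bound {n k : ℕ} (c : Sym2 (Fin n) → Fin k)
    (hc : IsCompleteEdgeColoring (⊤ : SimpleGraph (Fin n)) c) : k ≤ n.choose 2 := by
  classical
  choose g hg hcg using hc.1
  have hinj : Set.InjOn g (Finset.univ : Finset (Fin k)) := by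
    intro a _ b _ hab
    rw [← hcg a, ← hcg b, hab]
  have hmap : ∀ i ∈ (Finset.univ : Finset (Fin k)), g i ∈ (⊤ : SimpleGraph (Fin n)).edgeFinset :=
    fun i _ => SimpleGraph.mem_edgeFinset.mpr (hg i)
  have h := Finset.card_le_card_of_injOn g hmap hinj
  rw [Finset.card_univ, Fintype.card_fin] at h
  calc k ≤ (⊤ : SimpleGraph (Fin n)).edgeFinset.card := h
  _ = (Fintype.card (Fin n)).choose 2 := SimpleGraph.card_edgeFinset_top_eq_card_choose_two
  _ = n.choose 2 := by rw [Fintype.card_fin]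

lemma key_bound {n k : ℕ} (c : Sym2 (Fin n) → Fin k)
    (hc : IsCompleteEdgeColoring (⊤ : SimpleGraph (Fin n)) c)
    (hconn : IsConnectedEdgeColoring (⊤ : SimpleGraph (Fin n)) c) :
    k * k ≤ k + (n - 2) * (n.choose 2 + k) := by
  classical
  rcases Nat.eq_zero_or_pos k with hk | hk
  · simp [hk]
  obtain ⟨e0, he0, -⟩ := hc.1 ⟨0, hk⟩
  have hn : 2 ≤ n := by
    induction e0 with
    | _ a b =>
      rw [SimpleGraph.mem_edgeSet, SimpleGraph.top_adj] at he0
      have : 1 < Fintype.card (Fin n) := Fintype.one_lt_card_iff.mpr ⟨a, b, he0⟩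
      simp at this; omega
  haveI : Inhabited (Fin n) := ⟨⟨0, by omega⟩⟩
  set T : Fin n → Finset (Fin k) := fun u => Finset.univ.filter
    (fun i => ∃ w, (⊤ : SimpleGraph (Fin n)).Adj u w ∧ c s(u, w) = i) with hT
  -- each vertex sees at most n-1 colors
  have hTle : ∀ u, (T u).card ≤ n - 1 := by
    intro u
    have hmem : ∀ i ∈ T u, ∃ w, (⊤ : SimpleGraph (Fin n)).Adj u w ∧ c s(u, w) = i := by
      intro i hi
      simpa [hT] using (Finset.mem_filter.mp hi).2
    choose w hw hcw using hmem
    set f : Fin k → Fin n := fun i => if h : i ∈ T u then w i h else u with hf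
    have hmap : ∀ i ∈ T u, f i ∈ Finset.univ.erase u := by
      intro i hi
      rw [Finset.mem_erase]
      refine ⟨?_, Finset.mem_univ _⟩
      simp only [hf, dif_pos hi]
      exact (hw i hi).ne'
    have hinj : Set.InjOn f (T u) := by
      intro a ha b hb hab
      rw [Finset.mem_coe] at ha hb
      simp only [hf] at hab
      rw [dif_pos ha, dif_pos hb] at hab
      rw [← hcw a ha, ← hcw b hb, hab]
    have := Finset.card_le_card_of_injOn f hmap hinj
    simpa using this
  -- vertex set of each color class
  set Vf : Fin k → Finset (Fin n) := fun i => Finset.univ.filter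
    (fun u => ∃ w, (⊤ : SimpleGraph (Fin n)).Adj u w ∧ c s(u, w) = i) with hVf
  -- edge sets of colors
  set Ef : Fin k → Finset (Sym2 (Fin n)) := fun i =>
    (⊤ : SimpleGraph (Fin n)).edgeFinset.filter (fun e => c e = i) with hEf
  -- sum of T-cards equals sum of Vf-cards
  have hswap : (∑ u, (T u).card) = ∑ i, (Vf i).card := by
    simp only [hT, hVf, Finset.card_filter]
    rw [Finset.sum_comm]
  -- connectivity : each color class has few vertices
  have hVle : ∀ i, (Vf i).card ≤ (Ef i).card + 1 := by
    intro i
    set G' := colorClassSubgraph (⊤ : SimpleGraph (Fin n)) c i with hG'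
    have hcon : G'.coe.Connected := (hconn i).coe
    have h1 : Fintype.card G'.verts ≤ Fintype.card G'.coe.edgeSet + 1 :=
      connected_card_le' G'.coe hcon
    have h2 : (Vf i).card = Fintype.card G'.verts := by
      rw [← Set.toFinset_card]
      congr 1
      ext v
      simp [hVf, hG', colorClassSubgraph, Set.mem_toFinset]
    have h3 : Fintype.card G'.coe.edgeSet ≤ (Ef i).card := by
      rw [← Fintype.card_coe (Ef i)]
      have hmm : ∀ e : G'.coe.edgeSet, Sym2.map Subtype.val (e : Sym2 G'.verts) ∈ Ef i := by
        rintro ⟨e, he⟩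
        induction e with
        | _ a b =>
          rw [SimpleGraph.mem_edgeSet] at he
          simp only [hG', SimpleGraph.Subgraph.coe_adj, colorClassSubgraph] at he
          obtain ⟨hadj, hci⟩ := he
          simp only [hEf, Sym2.map_pair_eq, Finset.mem_filter, SimpleGraph.mem_edgeFinset,
            SimpleGraph.mem_edgeSet]
          exact ⟨hadj, hci⟩
      apply Fintype.card_le_of_injective
        (fun e => (⟨Sym2.map Subtype.val e.1, hmm e⟩ : {x // x ∈ Ef i}))
      intro a b hab
      apply Subtype.ext
      exact Sym2.map.injective Subtype.val_injective (congrArg Subtype.val hab)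
    omega
  -- total edges
  have hEsum : (∑ i, (Ef i).card) = n.choose 2 := by
    rw [hEf]
    rw [← Finset.card_eq_sum_card_fiberwise (f := c) (t := Finset.univ) (fun e _ => Finset.mem_univ _)]
    rw [SimpleGraph.card_edgeFinset_top_eq_card_choose_two, Fintype.card_fin]
  have hsum : (∑ u, (T u).card) ≤ n.choose 2 + k := by
    rw [hswap]
    calc ∑ i, (Vf i).card ≤ ∑ i, ((Ef i).card + 1) := Finset.sum_le_sum (fun i _ => hVle i)
    _ = (∑ i, (Ef i).card) + k := by rw [Finset.sum_add_distrib]; simp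
    _ = n.choose 2 + k := by rw [hEsum]
  -- pair counting
  set P : Finset (Fin k × Fin k) := Finset.univ.offDiag with hP
  set pick : Fin k × Fin k → Fin n := fun p =>
    if h : ∃ u : Fin n, p.1 ∈ T u ∧ p.2 ∈ T u then h.choose else default with hpick
  have hpickT : ∀ p ∈ P, p.1 ∈ T (pick p) ∧ p.2 ∈ T (pick p) := by
    intro p hp
    have hne : p.1 ≠ p.2 := (Finset.mem_offDiag.mp hp).2.2
    obtain ⟨u, v, w, huv, huw, h1, h2⟩ := hc.2 p.1 p.2 hne
    have hex : ∃ u : Fin n, p.1 ∈ T u ∧ p.2 ∈ T u := by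
      refine ⟨u, ?_, ?_⟩ <;> rw [hT] <;> simp only [Finset.mem_filter]
      · exact ⟨Finset.mem_univ _, v, huv, h1⟩
      · exact ⟨Finset.mem_univ _, w, huw, h2⟩
    simp only [hpick, dif_pos hex]
    exact hex.choose_spec
  have hfib : P.card = ∑ u, (P.filter (fun p => pick p = u)).card :=
    Finset.card_eq_sum_card_fiberwise (fun p _ => Finset.mem_univ _)
  have hfible : ∀ u, (P.filter (fun p => pick p = u)).card ≤ (T u).card * (n - 2) := by
    intro u
    have hsub : P.filter (fun p => pick p = u) ⊆ (T u).offDiag := by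
      intro p hp
      obtain ⟨hpP, hpu⟩ := Finset.mem_filter.mp hp
      obtain ⟨h1, h2⟩ := hpickT p hpP
      rw [hpu] at h1 h2
      exact Finset.mem_offDiag.mpr ⟨h1, h2, (Finset.mem_offDiag.mp hpP).2.2⟩
    calc (P.filter (fun p => pick p = u)).card ≤ (T u).offDiag.card :=
          Finset.card_le_card hsub
    _ = (T u).card * (T u).card - (T u).card := Finset.offDiag_card _
    _ ≤ (T u).card * (n - 2) := by
        have h1 := hTle u
        have h2 : (T u).card * (T u).card ≤ (T u).card * (n - 1) :=
          Nat.mul_le_mul_left _ h1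
        have h3 : (T u).card * (n - 1) = (T u).card * (n - 2) + (T u).card := by
          have : n - 1 = (n - 2) + 1 := by omega
          rw [this, Nat.mul_add, Nat.mul_one]
        omega
  have hPcard : P.card = k * k - k := by
    rw [hP, Finset.offDiag_card]
    simp
  have final : k * k - k ≤ (n - 2) * (n.choose 2 + k) := by
    calc k * k - k = P.card := hPcard.symm
    _ = ∑ u, (P.filter (fun p => pick p = u)).card := hfib
    _ ≤ ∑ u, (T u).card * (n - 2) := Finset.sum_le_sum (fun u _ => hfible u)
    _ = (∑ u, (T u).card) * (n - 2) := by rw [Finset.sum_mul]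
    _ ≤ (n.choose 2 + k) * (n - 2) := Nat.mul_le_mul_right _ hsum
    _ = (n - 2) * (n.choose 2 + k) := Nat.mul_comm _ _
  omega

lemma psi_bounds (n : ℕ) :
    connectedPseudoachromaticIndex n ≤ n.choose 2 ∧
    connectedPseudoachromaticIndex n * connectedPseudoachromaticIndex n ≤
      connectedPseudoachromaticIndex n +
        (n - 2) * (n.choose 2 + connectedPseudoachromaticIndex n) := by
  set S : Set ℕ := {k | ∃ c : Sym2 (Fin n) → Fin k,
    IsCompleteEdgeColoring (⊤ : SimpleGraph (Fin n)) c ∧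
      IsConnectedEdgeColoring (⊤ : SimpleGraph (Fin n)) c} with hS
  have hpsi : connectedPseudoachromaticIndex n = sSup S := rfl
  rcases S.eq_empty_or_nonempty with h | h
  · rw [hpsi, h, csSup_empty]
    simp
  · have hbdd : BddAbove S := ⟨n.choose 2, fun k hk => by
      obtain ⟨c, hc, -⟩ := hk; exact crude_bound c hc⟩
    obtain ⟨c, hc, hco⟩ := Nat.sSup_mem h hbdd
    rw [hpsi]
    exact ⟨crude_bound c hc, key_bound c hc hco⟩

theorem limsup_connected_pseudoachromatic_index_le :
    Filter.limsup
      (fun n : ℕ => (connectedPseudoachromaticIndex n : ℝ) / (n : ℝ) ^ ((3 : ℝ) / 2))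
      Filter.atTop ≤ 1 / Real.sqrt 2 := by
  have key : ∀ n : ℕ, 1 ≤ n →
      (connectedPseudoachromaticIndex n : ℝ) / (n : ℝ) ^ ((3 : ℝ) / 2) ≤
        Real.sqrt (1/2 + 2 / Real.sqrt n) := by
    intro n hn
    obtain ⟨hb1, hb2⟩ := psi_bounds n
    set ψ := connectedPseudoachromaticIndex n with hψ
    have hchoose : 2 * n.choose 2 = n * (n - 1) := by
      rw [Nat.choose_two_right]
      have he : 2 ∣ n * (n - 1) := by
        rcases Nat.even_or_odd n with h | h
        · exact Dvd.dvd.mul_right h.two_dvd _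
        · rcases n with _ | m
          · simp
          · have : Even (m + 1 - 1) := by simpa using Nat.Odd.sub_odd h odd_one
            exact Dvd.dvd.mul_left this.two_dvd _
      exact Nat.mul_div_cancel' he
    have hnat1 : ψ ≤ n * n := by
      refine le_trans hb1 ?_
      rw [Nat.choose_two_right]
      calc n*(n-1)/2 ≤ n*(n-1) := Nat.div_le_self _ _
      _ ≤ n*n := Nat.mul_le_mul_left _ (Nat.sub_le _ _)
    have hnat2 : 2 * (ψ * ψ) ≤ n*n*n + 2*(n*ψ) := by
      rcases Nat.lt_or_ge n 2 with h2 | h2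
      · interval_cases n
        have hz : ψ = 0 := by
          have := hb1
          simp [Nat.choose_eq_zero_of_lt] at this
          exact this
        rw [hz]
        omega
      · obtain ⟨m, rfl⟩ : ∃ m, n = m + 2 := ⟨n - 2, by omega⟩
        have hC := hchoose
        set C := (m+2).choose 2 with hCdef
        have hb2' : ψ*ψ ≤ ψ + m*(C+ψ) := by simpa using hb2
        have hC' : 2*C = (m+2)*(m+1) := by simpa using hC
        nlinarith [hb2', hC', Nat.zero_le ψ, Nat.zero_le m]
    -- pass to the reals
    have hψR : (0:ℝ) ≤ (ψ:ℝ) := by positivity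
    have hN1 : (1:ℝ) ≤ (n:ℝ) := by exact_mod_cast hn
    set M : ℝ := Real.sqrt (n:ℝ) with hM
    have hM1 : (1:ℝ) ≤ M := by
      rw [hM, show (1:ℝ) = Real.sqrt 1 by simp]
      exact Real.sqrt_le_sqrt hN1
    have hM2 : M^2 = (n:ℝ) := Real.sq_sqrt (by linarith)
    have hR1 : (ψ:ℝ) ≤ M^2 * M^2 := by
      rw [hM2]; exact_mod_cast hnat1
    have hR2 : 2*((ψ:ℝ)*(ψ:ℝ)) ≤ M^2*M^2*M^2 + 2*(M^2*(ψ:ℝ)) := by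
      rw [hM2]; exact_mod_cast hnat2
    have hMpos : (0:ℝ) < M := by linarith
    have hstep : (ψ:ℝ) ≤ 2*M^3 := by
      by_contra hcon
      push_neg at hcon
      have h1 : (2*M^3)*(2*M^3) < (ψ:ℝ)*(ψ:ℝ) :=
        mul_lt_mul'' hcon hcon (by positivity) (by positivity)
      have h2 : 2*(M^2*(ψ:ℝ)) ≤ 2*(M^2*(M^2*M^2)) := by nlinarith [hR1, sq_nonneg M]
      nlinarith [h1, h2, hR2, sq_nonneg (M^3)]
    have hfinal2 : (ψ:ℝ)^2 ≤ (1/2 + 2/M) * (M^3)^2 := by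
      have hexp : (1/2 + 2/M) * (M^3)^2 = M^6/2 + 2*M^5 := by
        field_simp
      rw [hexp]
      nlinarith [hR2, hstep, hM1]
    have hNpow : (n:ℝ) ^ ((3:ℝ)/2) = M^3 := by
      rw [hM, Real.sqrt_eq_rpow]
      rw [← Real.rpow_natCast ((n:ℝ) ^ ((1:ℝ)/2)) 3,
        ← Real.rpow_mul (by linarith : (0:ℝ) ≤ (n:ℝ))]
      norm_num
    rw [hNpow, div_le_iff₀ (by positivity : (0:ℝ) < M^3)]
    have hsq : Real.sqrt (1/2 + 2/M) * M^3 = Real.sqrt ((1/2+2/M) * (M^3)^2) := by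
      rw [Real.sqrt_mul (by positivity : (0:ℝ) ≤ 1/2 + 2/M),
        Real.sqrt_sq (by positivity : (0:ℝ) ≤ M^3)]
    rw [hsq]
    exact Real.le_sqrt_of_sq_le hfinal2
  set f := fun n : ℕ => (connectedPseudoachromaticIndex n : ℝ) / (n : ℝ) ^ ((3:ℝ)/2) with hf
  set g := fun n : ℕ => Real.sqrt (1/2 + 2 / Real.sqrt n) with hg
  have hfg : f ≤ᶠ[Filter.atTop] g := Filter.eventually_atTop.mpr ⟨1, key⟩
  have hsqrtT : Filter.Tendsto (fun n : ℕ => Real.sqrt (n:ℝ)) Filter.atTop Filter.atTop := by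
    have h1 : Filter.Tendsto (fun x : ℝ => x ^ ((1:ℝ)/2)) Filter.atTop Filter.atTop :=
      tendsto_rpow_atTop (by norm_num)
    have h2 := h1.comp (tendsto_natCast_atTop_atTop (R := ℝ))
    refine h2.congr (fun n => ?_)
    simp [Function.comp, Real.sqrt_eq_rpow]
  have hgT : Filter.Tendsto g Filter.atTop (nhds (Real.sqrt (1/2))) := by
    have h2 : Filter.Tendsto (fun n : ℕ => 2 / Real.sqrt (n:ℝ)) Filter.atTop (nhds 0) :=
      Filter.Tendsto.div_atTop tendsto_const_nhds hsqrtT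
    have h3 : Filter.Tendsto (fun n : ℕ => 1/2 + 2 / Real.sqrt (n:ℝ)) Filter.atTop
        (nhds (1/2)) := by
      simpa using (tendsto_const_nhds (x := (1/2:ℝ)) (f := Filter.atTop (α := ℕ))).add h2
    exact (Real.continuous_sqrt.tendsto _).comp (by simpa using h3)
  have hbound : Filter.IsBoundedUnder (· ≤ ·) Filter.atTop g := hgT.isBoundedUnder_le
  have hcob : Filter.IsCoboundedUnder (· ≤ ·) Filter.atTop f :=
    Filter.isCoboundedUnder_le_of_le Filter.atTop (x := 0) (fun n => by positivity)
  calc Filter.limsup f Filter.atTop ≤ Filter.limsup g Filter.atTop :=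
        Filter.limsup_le_limsup hfg hcob hbound
  _ = Real.sqrt (1/2) := hgT.limsup_eq
  _ = 1 / Real.sqrt 2 := by
      rw [show (1:ℝ)/2 = 2⁻¹ by norm_num, Real.sqrt_inv, one_div]
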